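/- Let H be an infinite-dimensional Hilbert space and let v, w ∈ B(H) be operators whose images in the Calkin algebra C(H) = B(H)/K(H) are unitary. If (Ad v)(a) − (Ad w)(a) is compact for every a ∈ B(H), then there exists a complex number z of modulus 1 such that v − z·w is compact. -/

import Mathlib

open ContinuousLinearMap Filter Topology
set_option linter.unusedSectionVars false
set_option linter.unnecessarySimpa false
set_option synthInstance.maxHeartbeats 1000000
set_option maxHeartbeats 1000000
section Aux
variable {H : Type*} [NormedAddCommGroup H] [InnerProductSpace ℂ H] [CompleteSpace H]
local notation "⟪" x ", " y "⟫" => @inner ℂ _ _ x y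

lemma cpt_compL (f g : H →L[ℂ] H) (hf : IsCompactOperator ⇑f) :
    IsCompactOperator ⇑(g ∘L f) := by
  rw [coe_comp']; exact hf.continuous_comp g.continuous

lemma cpt_compR (f g : H →L[ℂ] H) (hf : IsCompactOperator ⇑f) :
    IsCompactOperator ⇑(f ∘L g) := by
  rw [coe_comp']; exact hf.comp_clm g

lemma cpt_sub (f g : H →L[ℂ] H) (hf : IsCompactOperator ⇑f) (hg : IsCompactOperator ⇑g) :
    IsCompactOperator ⇑(f - g) := by
  have := hf.sub hg; rwa [show ⇑f - ⇑g = ⇑(f - g) by rfl] at this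

lemma cpt_add (f g : H →L[ℂ] H) (hf : IsCompactOperator ⇑f) (hg : IsCompactOperator ⇑g) :
    IsCompactOperator ⇑(f + g) := by
  have := hf.add hg; rwa [show ⇑f + ⇑g = ⇑(f + g) by rfl] at this

lemma cpt_smul (c : ℂ) (f : H →L[ℂ] H) (hf : IsCompactOperator ⇑f) :
    IsCompactOperator ⇑(c • f) := by
  have := hf.smul c; rwa [show c • ⇑f = ⇑(c • f) by rfl] at this

noncomputable def buildSeq (pick : Finset H → H) (g : H → Finset H) : ℕ → H
  | n =>
    letI := Classical.decEq H
    pick ((Finset.range n).attach.biUnion fun m => g (buildSeq pick g m.1))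
  termination_by n => n
  decreasing_by exact Finset.mem_range.mp m.2

lemma exists_seq_of_pick (g : H → Finset H) (hg : ∀ x, x ∈ g x) (P : H → Prop)
    (hpick : ∀ s : Finset H, ∃ x, (∀ y ∈ s, ⟪y, x⟫ = 0) ∧ ‖x‖ = 1 ∧ P x) :
    ∃ f : ℕ → H, Orthonormal ℂ f ∧
      (∀ m n, m < n → ∀ y ∈ g (f m), ⟪y, f n⟫ = 0) ∧ ∀ n, P (f n) := by
  classical
  set pick : Finset H → H := fun s => (hpick s).choose with hpickdef
  have hpick' : ∀ s : Finset H, (∀ y ∈ s, ⟪y, pick s⟫ = 0) ∧ ‖pick s‖ = 1 ∧ P (pick s) :=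
    fun s => (hpick s).choose_spec
  set f : ℕ → H := buildSeq pick g with hf
  have horth : ∀ m n, m < n → ∀ y ∈ g (f m), ⟪y, f n⟫ = 0 := by
    intro m n hmn y hy
    have hmem : y ∈ (Finset.range n).attach.biUnion fun m => g (buildSeq pick g m.1) :=
      Finset.mem_biUnion.2 ⟨⟨m, Finset.mem_range.2 hmn⟩, Finset.mem_attach _ _, hy⟩
    have : f n = pick ((Finset.range n).attach.biUnion fun m => g (buildSeq pick g m.1)) := by
      rw [hf, buildSeq]
    rw [this]
    exact (hpick' _).1 y hmem
  have hnorm : ∀ n, ‖f n‖ = 1 := by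
    intro n
    have : f n = pick ((Finset.range n).attach.biUnion fun m => g (buildSeq pick g m.1)) := by
      rw [hf, buildSeq]
    rw [this]; exact (hpick' _).2.1
  have hP : ∀ n, P (f n) := by
    intro n
    have : f n = pick ((Finset.range n).attach.biUnion fun m => g (buildSeq pick g m.1)) := by
      rw [hf, buildSeq]
    rw [this]; exact (hpick' _).2.2
  refine ⟨f, ?_, horth, hP⟩
  rw [orthonormal_iff_ite]
  intro i j
  rcases lt_trichotomy i j with h | h | h
  · rw [if_neg h.ne]
    exact horth i j h (f i) (hg (f i))
  · subst h; rw [if_pos rfl, inner_self_eq_norm_sq_to_K, hnorm]; norm_num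
  · rw [if_neg h.ne']
    rw [← inner_conj_symm]
    rw [horth j i h (f j) (hg (f j))]
    simp

lemma orthonormal_weak_null {f : ℕ → H} (hf : Orthonormal ℂ f) (y : H) :
    Tendsto (fun n => ⟪y, f n⟫) atTop (𝓝 0) := by
  have hsum : Summable fun n => ‖⟪y, f n⟫‖ ^ 2 := by
    have := hf.inner_products_summable y
    simpa only [norm_inner_symm] using this
  have h2 : Tendsto (fun n => ‖⟪y, f n⟫‖ ^ 2) atTop (𝓝 0) := hsum.tendsto_atTop_zero
  rw [tendsto_zero_iff_norm_tendsto_zero]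
  have := (h2.sqrt)
  simpa [Real.sqrt_sq (norm_nonneg _)] using this

lemma compact_weak_null {T : H →L[ℂ] H} (hT : IsCompactOperator ⇑T) {x : ℕ → H}
    (hb : ∀ n, ‖x n‖ ≤ 1) (hw : ∀ y, Tendsto (fun n => ⟪y, x n⟫) atTop (𝓝 0)) :
    Tendsto (fun n => T (x n)) atTop (𝓝 0) := by
  by_contra hcon
  obtain ⟨ε, hε, hfreq⟩ : ∃ ε > 0, ∃ᶠ n in atTop, ε ≤ ‖T (x n)‖ := by
    rw [Metric.tendsto_atTop] at hcon
    push_neg at hcon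
    obtain ⟨ε, hε, hcon⟩ := hcon
    refine ⟨ε, hε, ?_⟩
    rw [frequently_atTop]
    intro a
    obtain ⟨n, hn, hd⟩ := hcon a
    exact ⟨n, hn, by simpa [dist_eq_norm] using hd⟩
  obtain ⟨φ, hφ, hφ2⟩ := Filter.extraction_of_frequently_atTop hfreq
  obtain ⟨K, hK, hKsub⟩ := hT.image_closedBall_subset_compact 1
  have hmem : ∀ n, T (x (φ n)) ∈ K := by
    intro n
    apply hKsub
    exact Set.mem_image_of_mem _ (by simpa [Metric.mem_closedBall, dist_eq_norm] using hb (φ n))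
  obtain ⟨g, _, ψ, hψ, hψ2⟩ := hK.tendsto_subseq hmem
  have hg0 : g = 0 := by
    have h1 : Tendsto (fun n => ⟪g, T (x (φ (ψ n)))⟫) atTop (𝓝 ⟪g, g⟫) :=
      ((continuous_const.inner continuous_id).tendsto g).comp hψ2
    have h2 : Tendsto (fun n => ⟪g, T (x (φ (ψ n)))⟫) atTop (𝓝 0) := by
      have h3 : ∀ n, ⟪g, T (x n)⟫ = ⟪adjoint T g, x n⟫ := fun n =>
        (adjoint_inner_left T (x n) g).symm
      simp only [h3]
      exact (hw (adjoint T g)).comp ((hφ.comp hψ).tendsto_atTop)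
    have := tendsto_nhds_unique h1 h2
    exact inner_self_eq_zero.mp this
  have hge : ε ≤ ‖g‖ := by
    have : Tendsto (fun n => ‖T (x (φ (ψ n)))‖) atTop (𝓝 ‖g‖) := hψ2.norm
    exact ge_of_tendsto' this fun n => hφ2 (ψ n)
  rw [hg0] at hge; simp at hge; exact absurd (le_antisymm hge hε.le) (by intro h; linarith)

lemma exists_unit_perp (hinf : ¬ FiniteDimensional ℂ H) (s : Finset H) :
    ∃ x : H, (∀ y ∈ s, ⟪y, x⟫ = 0) ∧ ‖x‖ = 1 := by
  set F : Submodule ℂ H := Submodule.span ℂ (s : Set H) with hF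
  have hFne : F ≠ ⊤ := by
    intro h
    exact hinf (Module.finite_def.mpr ⟨s, h⟩)
  have hne : Fᗮ ≠ ⊥ := by
    intro h
    exact hFne (Submodule.orthogonal_eq_bot_iff.mp h)
  obtain ⟨z, hz, hz0⟩ := Submodule.exists_mem_ne_zero_of_ne_bot hne
  refine ⟨(‖z‖ : ℂ)⁻¹ • z, fun y hy => ?_, ?_⟩
  · rw [inner_smul_right]
    rw [Submodule.inner_right_of_mem_orthogonal (Submodule.subset_span hy) hz]
    simp
  · rw [norm_smul]
    simp only [norm_inv, Complex.norm_real, norm_norm]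
    rw [inv_mul_cancel₀ (norm_ne_zero_iff.mpr hz0)]

lemma finite_rank_compact (F : Submodule ℂ H) [FiniteDimensional ℂ F] (T : H →L[ℂ] H) :
    IsCompactOperator ⇑(T ∘L F.subtypeL ∘L Submodule.orthogonalProjection F) := by
  have hA : IsCompactOperator ⇑(T ∘L F.subtypeL) := by
    refine ⟨(T ∘L F.subtypeL) '' Metric.closedBall 0 1,
      ((isCompact_closedBall (0 : F) 1).image (T ∘L F.subtypeL).continuous), ?_⟩
    filter_upwards [Metric.closedBall_mem_nhds (0 : F) one_pos] with x hx
    exact Set.mem_image_of_mem _ hx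
  have := hA.comp_clm (Submodule.orthogonalProjection F)
  rwa [show ⇑(T ∘L F.subtypeL) ∘ ⇑(Submodule.orthogonalProjection F)
      = ⇑(T ∘L F.subtypeL ∘L Submodule.orthogonalProjection F) from rfl] at this

lemma norm_sub_proj_le (F : Submodule ℂ H) [Submodule.HasOrthogonalProjection F] (x : H) :
    ‖x - (Submodule.orthogonalProjection F x : H)‖ ≤ ‖x‖ := by
  have h := Submodule.orthogonalProjectionFn_norm_sq F x
  rw [Submodule.orthogonalProjectionFn_eq] at h
  nlinarith [norm_nonneg (x - (Submodule.orthogonalProjection F x : H)), norm_nonneg x,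
    norm_nonneg ((Submodule.orthogonalProjection F x : H))]

lemma exists_eps_of_not_compact {T : H →L[ℂ] H} (hT : ¬ IsCompactOperator ⇑T) :
    ∃ ε > 0, ∀ s : Finset H, ∃ x : H, (∀ y ∈ s, ⟪y, x⟫ = 0) ∧ ‖x‖ = 1 ∧ ε ≤ ‖T x‖ := by
  by_contra hcon
  push_neg at hcon
  apply hT
  -- T is in the closure of the set of compact operators
  have hcl : IsClosed {S : H →L[ℂ] H | IsCompactOperator ⇑S} := isClosed_setOf_isCompactOperator
  have : T ∈ {S : H →L[ℂ] H | IsCompactOperator ⇑S} := by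
    rw [← hcl.closure_eq]
    rw [Metric.mem_closure_iff]
    intro ε hε
    obtain ⟨s, hs⟩ := hcon (ε/2) (by linarith)
    set F : Submodule ℂ H := Submodule.span ℂ (s : Set H) with hF
    haveI : FiniteDimensional ℂ F := FiniteDimensional.span_finset ℂ s
    haveI : Submodule.HasOrthogonalProjection F := Submodule.HasOrthogonalProjection.ofCompleteSpace F
    set T' : H →L[ℂ] H := T ∘L F.subtypeL ∘L Submodule.orthogonalProjection F with hT'
    refine ⟨T', finite_rank_compact F T, ?_⟩
    rw [dist_eq_norm]
    have hb : ‖T - T'‖ ≤ ε/2 := by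
      refine opNorm_le_bound _ (by linarith) fun x => ?_
      set z : H := x - (Submodule.orthogonalProjection F x : H) with hz
      have hTz : (T - T') x = T z := by
        simp [hT', hz, map_sub]
      rw [hTz]
      rcases eq_or_ne z 0 with h0 | h0
      · rw [h0]; simp; positivity
      · have hzH : ∀ y ∈ s, ⟪y, z⟫ = 0 := fun y hy =>
          Submodule.inner_right_of_mem_orthogonal (show y ∈ F from Submodule.subset_span hy)
            (Submodule.sub_starProjection_mem_orthogonal (K := F) x)
        have hnz : ‖(‖z‖ : ℂ)⁻¹ • z‖ = 1 := by
          rw [norm_smul]; simp only [norm_inv, Complex.norm_real, norm_norm]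
          rw [inv_mul_cancel₀ (norm_ne_zero_iff.mpr h0)]
        have hperp : ∀ y ∈ s, ⟪y, (‖z‖ : ℂ)⁻¹ • z⟫ = 0 := by
          intro y hy; rw [inner_smul_right, hzH y hy]; simp
        have := hs _ hperp hnz
        have hTz2 : ‖T ((‖z‖ : ℂ)⁻¹ • z)‖ = ‖z‖⁻¹ * ‖T z‖ := by
          rw [map_smul, norm_smul]; simp
        rw [hTz2] at this
        have hzx : ‖z‖ ≤ ‖x‖ := norm_sub_proj_le F x
        have hz0 : 0 < ‖z‖ := norm_pos_iff.mpr h0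
        calc ‖T z‖ = ‖z‖ * (‖z‖⁻¹ * ‖T z‖) := by field_simp
        _ ≤ ‖z‖ * (ε/2) := by
            apply mul_le_mul_of_nonneg_left this.le hz0.le
        _ ≤ ε/2 * ‖x‖ := by rw [mul_comm]; exact mul_le_mul_of_nonneg_left hzx (by linarith)
    calc ‖T - T'‖ ≤ ε/2 := hb
    _ < ε := by linarith
  exact this

noncomputable def onIsom {f : ℕ → H} (hf : Orthonormal ℂ f) :
    lp (fun _ : ℕ => ℂ) 2 →L[ℂ] H :=
  hf.orthogonalFamily.linearIsometry.toContinuousLinearMap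

lemma onIsom_single {f : ℕ → H} (hf : Orthonormal ℂ f) (n : ℕ) :
    onIsom hf (lp.single 2 n (1 : ℂ)) = f n := by
  classical
  have := hf.orthogonalFamily.linearIsometry_apply_single (i := n) (1 : ℂ)
  simpa [onIsom, LinearIsometry.toSpanSingleton] using this

lemma inner_onIsom {f : ℕ → H} (hf : Orthonormal ℂ f) (n : ℕ) (c : lp (fun _ : ℕ => ℂ) 2) :
    ⟪f n, onIsom hf c⟫ = c n := by
  classical
  have hsum := hf.orthogonalFamily.hasSum_linearIsometry c
  have h2 := (innerSL ℂ (f n)).hasSum hsum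
  have h3 : HasSum (fun m => if m = n then c n else 0) (⟪f n, onIsom hf c⟫) := by
    convert h2 using 2 with m
    · rfl
    simp only [innerSL_apply_apply, LinearIsometry.toSpanSingleton_apply, inner_smul_right]
    rw [orthonormal_iff_ite.mp hf n m]
    by_cases hmn : m = n
    · subst hmn; simp
    · rw [if_neg hmn, if_neg (Ne.symm hmn)]; ring
    rfl
  exact (h3.unique (hasSum_ite_eq n (c n)))

lemma adjoint_onIsom_apply {f : ℕ → H} (hf : Orthonormal ℂ f) (n : ℕ) :
    adjoint (onIsom hf) (f n) = lp.single 2 n (1 : ℂ) := by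
  classical
  refine ext_inner_right ℂ fun c => ?_
  rw [adjoint_inner_left, inner_onIsom hf n c, lp.inner_single_left]
  simp

lemma mem_orthogonal_closure_span {f : ℕ → H} (z : H) (hz : ∀ n, ⟪z, f n⟫ = 0) :
    z ∈ ((Submodule.span ℂ (Set.range f)).topologicalClosure)ᗮ := by
  rw [Submodule.mem_orthogonal]
  intro u hu
  rw [inner_eq_zero_symm]
  change u ∈ (Submodule.span ℂ (Set.range f)).topologicalClosure at hu
  have hker : (Submodule.span ℂ (Set.range f)).topologicalClosure ≤
      LinearMap.ker (innerSL ℂ z : H →L[ℂ] ℂ).toLinearMap := by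
    apply Submodule.topologicalClosure_minimal
    · rw [Submodule.span_le]
      rintro _ ⟨n, rfl⟩
      simp only [SetLike.mem_coe, LinearMap.mem_ker, ContinuousLinearMap.coe_coe, innerSL_apply_apply]
      exact hz n
    · exact ContinuousLinearMap.isClosed_ker (innerSL ℂ z)
  have := hker hu
  simpa using this

lemma adjoint_onIsom_coord {f : ℕ → H} (hf : Orthonormal ℂ f) (n : ℕ) (x : H) :
    (adjoint (onIsom hf) x) n = ⟪f n, x⟫ := by
  classical
  have h1 : ⟪lp.single 2 n (1:ℂ), adjoint (onIsom hf) x⟫ = ⟪onIsom hf (lp.single 2 n (1:ℂ)), x⟫ :=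
    adjoint_inner_right _ _ _
  rw [onIsom_single] at h1
  rw [lp.inner_single_left] at h1
  simpa using h1

lemma exists_scalar_of_commutes (hinf : ¬ FiniteDimensional ℂ H) (u : H →L[ℂ] H)
    (hu : ∀ a : H →L[ℂ] H, IsCompactOperator ⇑(u ∘L a - a ∘L u)) :
    ∃ lam : ℂ, IsCompactOperator ⇑(u - lam • 1) := by
  classical
  -- base orthonormal sequence
  obtain ⟨e, he, -, -⟩ := exists_seq_of_pick (fun x => {x}) (fun x => Finset.mem_singleton_self x)
    (fun _ => True) (fun s => by
      obtain ⟨x, hx1, hx2⟩ := exists_unit_perp hinf s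
      exact ⟨x, hx1, hx2, trivial⟩)
  -- diagonal cluster point
  set d : ℕ → ℂ := fun n => ⟪e n, u (e n)⟫ with hd
  have hdb : ∀ n, d n ∈ Metric.closedBall (0 : ℂ) ‖u‖ := by
    intro n
    rw [Metric.mem_closedBall, dist_zero_right]
    have h1 : ‖d n‖ ≤ ‖e n‖ * ‖u (e n)‖ := norm_inner_le_norm _ _
    have h2 : ‖u (e n)‖ ≤ ‖u‖ * ‖e n‖ := u.le_opNorm (e n)
    rw [he.1 n] at h1 h2
    simpa using h1.trans (by simpa using h2)
  obtain ⟨lam, -, φ, hφ, hdl⟩ := (isCompact_closedBall (0 : ℂ) ‖u‖).tendsto_subseq hdb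
  set e' : ℕ → H := e ∘ φ with he'def
  have he' : Orthonormal ℂ e' := he.comp φ hφ.injective
  refine ⟨lam, ?_⟩
  by_contra hT
  set T : H →L[ℂ] H := u - lam • 1 with hTdef
  obtain ⟨ε, hε, hpick⟩ := exists_eps_of_not_compact hT
  -- orthonormal sequence witnessing non-compactness, with extra orthogonality
  obtain ⟨f, hf, horth, hfε⟩ := exists_seq_of_pick
    (fun x => insert x (insert (T x) {adjoint T x})) (fun x => Finset.mem_insert_self x _)
    (fun x => ε ≤ ‖T x‖) hpick
  -- the partial isometry S sending e' n to f n
  set S : H →L[ℂ] H := onIsom hf ∘L adjoint (onIsom he') with hSdef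
  -- diagonal of u along f converges to lam
  set β : ℕ → ℂ := fun n => ⟪f n, u (f n)⟫ with hβ
  have hβlam : Tendsto β atTop (𝓝 lam) := by
    have hcom := compact_weak_null (hu S) (fun n => by rw [he'.1 n])
      (fun y => orthonormal_weak_null he' y)
    have hterm : ∀ n, β n - d (φ n) = ⟪f n, (u ∘L S - S ∘L u) (e' n)⟫ := by
      intro n
      have h1 : S (e' n) = f n := by
        rw [hSdef, coe_comp', Function.comp_apply, adjoint_onIsom_apply he' n, onIsom_single]
      have h2 : ⟪f n, S (u (e' n))⟫ = d (φ n) := by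
        rw [hSdef, coe_comp', Function.comp_apply, inner_onIsom hf n,
          adjoint_onIsom_coord he' n]
        rfl
      simp only [ContinuousLinearMap.sub_apply, coe_comp', Function.comp_apply, inner_sub_right]
      rw [h1, h2]
    have hto0 : Tendsto (fun n => β n - d (φ n)) atTop (𝓝 0) := by
      rw [tendsto_zero_iff_norm_tendsto_zero]
      have hb : ∀ n, ‖β n - d (φ n)‖ ≤ ‖(u ∘L S - S ∘L u) (e' n)‖ := by
        intro n
        rw [hterm n]
        calc ‖⟪f n, (u ∘L S - S ∘L u) (e' n)⟫‖ ≤ ‖f n‖ * ‖(u ∘L S - S ∘L u) (e' n)‖ :=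
          norm_inner_le_norm _ _
        _ = ‖(u ∘L S - S ∘L u) (e' n)‖ := by rw [hf.1 n, one_mul]
      exact squeeze_zero (fun n => norm_nonneg _) hb (tendsto_zero_iff_norm_tendsto_zero.mp hcom)
    have := hto0.add hdl
    simpa using this
  set α : ℕ → ℂ := fun n => β n - lam with hα
  have hα0 : Tendsto α atTop (𝓝 0) := by
    have := hβlam.sub (tendsto_const_nhds (α := ℕ) (x := lam))
    simpa using this
  -- the projection onto the closed span of f
  set K : Submodule ℂ H := (Submodule.span ℂ (Set.range f)).topologicalClosure with hK
  haveI : CompleteSpace K := (Submodule.isClosed_topologicalClosure _).completeSpace_coe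
  set Q : H →L[ℂ] H := K.subtypeL ∘L Submodule.orthogonalProjection K with hQ
  have hQf : ∀ n, Q (f n) = f n := by
    intro n
    have hmem : f n ∈ K :=
      (Submodule.le_topologicalClosure _) (Submodule.subset_span (Set.mem_range_self n))
    simp only [hQ, coe_comp', Function.comp_apply, Submodule.coe_subtypeL', Submodule.coe_subtype]
    exact Submodule.starProjection_eq_self_iff.mpr hmem
  set g : ℕ → H := fun n => T (f n) with hg
  have hαg : ∀ n, α n = ⟪f n, g n⟫ := by
    intro n
    simp only [hα, hβ, hg, hTdef, ContinuousLinearMap.sub_apply, smul_apply, one_apply,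
      inner_sub_right, inner_smul_right]
    rw [ContinuousLinearMap.one_apply, inner_self_eq_norm_sq_to_K, hf.1 n]
    norm_num
  have hQg : ∀ n, Q (g n) = α n • f n := by
    intro n
    have hperp : ∀ m, ⟪g n - α n • f n, f m⟫ = 0 := by
      intro m
      rcases lt_trichotomy m n with hmn | hmn | hmn
      · have h1 : ⟪f m, g n⟫ = 0 := by
          have := horth m n hmn (adjoint T (f m))
            (by simp [Finset.mem_insert, Finset.mem_singleton])
          rwa [adjoint_inner_left] at this
        have h2 : ⟪g n, f m⟫ = 0 := by rw [← inner_conj_symm, h1]; simp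
        rw [inner_sub_left, h2, inner_smul_left, orthonormal_iff_ite.mp hf n m,
          if_neg (by omega : ¬ n = m)]
        simp
      · subst hmn
        rw [inner_sub_left, inner_smul_left, orthonormal_iff_ite.mp hf m m, if_pos rfl,
          ← inner_conj_symm, ← hαg m]
        simp
      · have h2 : ⟪g n, f m⟫ = 0 :=
          horth n m hmn (T (f n)) (by simp [Finset.mem_insert, Finset.mem_singleton])
        rw [inner_sub_left, h2, inner_smul_left, orthonormal_iff_ite.mp hf n m,
          if_neg (by omega : ¬ n = m)]
        simp
    have hzK : g n - α n • f n ∈ Kᗮ := mem_orthogonal_closure_span _ hperp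
    have hz0 : Submodule.orthogonalProjection K (g n - α n • f n) = 0 :=
      Submodule.orthogonalProjection_mem_subspace_orthogonalComplement_eq_zero hzK
    have : Q (g n - α n • f n) = 0 := by
      simp only [hQ, coe_comp', Function.comp_apply, hz0]
      simp
    have hlin : Q (g n) - α n • Q (f n) = 0 := by
      rw [← this]; simp [map_sub, map_smul]
    rw [hQf n] at hlin
    exact sub_eq_zero.mp hlin
  -- final contradiction
  have hcomQ := compact_weak_null (hu Q) (fun n => le_of_eq (hf.1 n))
    (fun y => orthonormal_weak_null hf y)
  have hval : ∀ n, (u ∘L Q - Q ∘L u) (f n) = g n - α n • f n := by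
    intro n
    have hufn : u (f n) = g n + lam • f n := by
      simp only [hg, hTdef, ContinuousLinearMap.sub_apply, smul_apply, one_apply, ContinuousLinearMap.one_apply]
      abel
    have hrfl : (u ∘L Q - Q ∘L u) (f n) = u (Q (f n)) - Q (u (f n)) := rfl
    rw [hrfl, hQf n, hufn, map_add, map_smul, hQg n, hQf n]
    abel
  have hlower : ∀ n, ε - ‖α n‖ ≤ ‖(u ∘L Q - Q ∘L u) (f n)‖ := by
    intro n
    rw [hval n]
    have h1 : ‖g n‖ - ‖α n • f n‖ ≤ ‖g n - α n • f n‖ := norm_sub_norm_le _ _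
    have h2 : ‖α n • f n‖ = ‖α n‖ := by rw [norm_smul, hf.1 n, mul_one]
    have h3 : ε ≤ ‖g n‖ := hfε n
    linarith
  have h4 : Tendsto (fun n => ‖(u ∘L Q - Q ∘L u) (f n)‖) atTop (𝓝 0) :=
    tendsto_zero_iff_norm_tendsto_zero.mp hcomQ
  have h5 : Tendsto (fun n => ‖α n‖) atTop (𝓝 0) := tendsto_zero_iff_norm_tendsto_zero.mp hα0
  have h6 : ∀ᶠ n in atTop, ‖(u ∘L Q - Q ∘L u) (f n)‖ < ε / 2 :=
    (h4.eventually (gt_mem_nhds (by linarith : (0:ℝ) < ε / 2)))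
  have h7 : ∀ᶠ n in atTop, ‖α n‖ < ε / 4 :=
    (h5.eventually (gt_mem_nhds (by linarith : (0:ℝ) < ε / 4)))
  obtain ⟨n, hn6, hn7⟩ := (h6.and h7).exists
  have := hlower n
  linarith


end Aux

local notation "⟪" x ", " y "⟫" => @inner ℂ _ _ x y

/-- if `v` and `w` are bounded operators on an infinite-dimensional Hilbert space
whose images in the Calkin algebra are unitary, and `Ad v` and `Ad w` agree modulo compact
operators, then `v - z • w` is compact for some unimodular scalar `z`. -/
theorem exists_unimodular_of_ad_eq_mod_compact
    {H : Type*} [NormedAddCommGroup H] [InnerProductSpace ℂ H] [CompleteSpace H]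
    (hinf : ¬ FiniteDimensional ℂ H)
    (v w : H →L[ℂ] H)
    (hv₁ : IsCompactOperator ⇑(v ∘L adjoint v - 1))
    (hv₂ : IsCompactOperator ⇑(adjoint v ∘L v - 1))
    (hw₁ : IsCompactOperator ⇑(w ∘L adjoint w - 1))
    (hw₂ : IsCompactOperator ⇑(adjoint w ∘L w - 1))
    (h : ∀ a : H →L[ℂ] H,
      IsCompactOperator ⇑(v ∘L a ∘L adjoint v - w ∘L a ∘L adjoint w)) :
    ∃ z : ℂ, ‖z‖ = 1 ∧ IsCompactOperator ⇑(v - z • w) := by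
  classical
  set v' := adjoint v with hv'def
  set w' := adjoint w with hw'def
  set u : H →L[ℂ] H := w' * v with hudef
  set u' : H →L[ℂ] H := v' * w with hu'def
  have mulL : ∀ (f g : H →L[ℂ] H), IsCompactOperator ⇑f → IsCompactOperator ⇑(g * f) :=
    fun f g hf => cpt_compL f g hf
  have mulR : ∀ (f g : H →L[ℂ] H), IsCompactOperator ⇑f → IsCompactOperator ⇑(f * g) :=
    fun f g hf => cpt_compR f g hf
  have hclaim1 : ∀ a : H →L[ℂ] H, IsCompactOperator ⇑(u * a * u' - a) := by
    intro a
    have e1 : u * a * u' - a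
        = w' * (v * a * v' - w * a * w') * w
          + ((w' * w - 1) * (a * (w' * w)) + a * (w' * w - 1)) := by
      rw [hudef, hu'def]
      noncomm_ring
    rw [e1]
    exact cpt_add _ _ (mulR _ w (mulL _ w' (h a)))
      (cpt_add _ _ (mulR _ _ hw₂) (mulL _ a hw₂))
  have hclaim2 : IsCompactOperator ⇑(u' * u - 1) := by
    have e2 : u' * u - 1 = v' * (w * w' - 1) * v + (v' * v - 1) := by
      rw [hudef, hu'def]; noncomm_ring
    rw [e2]
    exact cpt_add _ _ (mulR _ v (mulL _ v' hw₁)) hv₂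
  have hu : ∀ a : H →L[ℂ] H, IsCompactOperator ⇑(u ∘L a - a ∘L u) := by
    intro a
    have e3 : u * a - a * u = (u * a * u' - a) * u - (u * a) * (u' * u - 1) := by
      noncomm_ring
    have : IsCompactOperator ⇑(u * a - a * u) := by
      rw [e3]
      exact cpt_sub _ _ (mulR _ u (hclaim1 a)) (mulL _ (u * a) hclaim2)
    exact this
  obtain ⟨lam, hlam⟩ := exists_scalar_of_commutes hinf u hu
  have hscal : IsCompactOperator ⇑(lam • u' - 1) := by
    have e4 : lam • u' - 1 = (u' * u - 1) - u' * (u - lam • 1) := by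
      rw [mul_sub]
      have : u' * (lam • (1 : H →L[ℂ] H)) = lam • u' := by
        rw [mul_smul_comm, mul_one]
      rw [this]
      abel
    rw [e4]
    exact cpt_sub _ _ hclaim2 (mulL _ u' hlam)
  have hlam0 : lam ≠ 0 := by
    intro h0
    rw [h0] at hscal
    simp only [zero_smul, zero_sub] at hscal
    have h1 : IsCompactOperator ⇑(1 : H →L[ℂ] H) := by
      have := hscal.neg
      rwa [show -⇑(-(1 : H →L[ℂ] H)) = ⇑(1 : H →L[ℂ] H) from by ext x; simp] at this
    obtain ⟨K, hK, hKmem⟩ := h1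
    obtain ⟨r, hr, hball⟩ := Metric.mem_nhds_iff.mp hKmem
    have hcb : IsCompact (Metric.closedBall (0 : H) (r / 2)) := by
      apply hK.of_isClosed_subset Metric.isClosed_closedBall
      intro x hx
      have : x ∈ Metric.ball (0 : H) r := by
        rw [Metric.mem_closedBall] at hx
        rw [Metric.mem_ball]
        linarith
      have := hball this
      simpa using this
    exact hinf (FiniteDimensional.of_isCompact_closedBall₀ ℂ (by linarith) hcb)
  have hadj : IsCompactOperator ⇑(u' - lam⁻¹ • 1) := by
    have e5 : u' - lam⁻¹ • 1 = lam⁻¹ • (lam • u' - 1) := by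
      rw [smul_sub, smul_smul, inv_mul_cancel₀ hlam0, one_smul]
    rw [e5]
    exact cpt_smul _ _ hscal
  have huadj : adjoint u = u' := by
    rw [hudef, hu'def]
    show adjoint (w' ∘L v) = v' ∘L w
    rw [ContinuousLinearMap.adjoint_comp, hw'def, adjoint_adjoint, hv'def]
  -- extract the modulus via an orthonormal sequence
  obtain ⟨e, he, -, -⟩ := exists_seq_of_pick (fun x => {x}) (fun x => Finset.mem_singleton_self x)
    (fun _ => True) (fun s => by
      obtain ⟨x, hx1, hx2⟩ := exists_unit_perp hinf s
      exact ⟨x, hx1, hx2, trivial⟩)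
  have hdiag : ∀ (A : H →L[ℂ] H) (c : ℂ), IsCompactOperator ⇑(A - c • 1) →
      Tendsto (fun n => ⟪e n, A (e n)⟫) atTop (𝓝 c) := by
    intro A c hA
    have h1 := compact_weak_null hA (fun n => le_of_eq (he.1 n)) (fun y => orthonormal_weak_null he y)
    have h2 : ∀ n, ⟪e n, A (e n)⟫ - c = ⟪e n, (A - c • 1) (e n)⟫ := by
      intro n
      simp only [ContinuousLinearMap.sub_apply, smul_apply, one_apply, inner_sub_right,
        inner_smul_right]
      rw [ContinuousLinearMap.one_apply, inner_self_eq_norm_sq_to_K, he.1 n]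
      norm_num
    have h3 : Tendsto (fun n => ⟪e n, A (e n)⟫ - c) atTop (𝓝 0) := by
      rw [tendsto_zero_iff_norm_tendsto_zero]
      apply squeeze_zero (fun n => norm_nonneg _) (fun n => ?_)
        (tendsto_zero_iff_norm_tendsto_zero.mp h1)
      rw [h2 n]
      calc ‖⟪e n, (A - c • 1) (e n)⟫‖ ≤ ‖e n‖ * ‖(A - c • 1) (e n)‖ := norm_inner_le_norm _ _
      _ = ‖(A - c • 1) (e n)‖ := by rw [he.1 n, one_mul]
    have := h3.add (tendsto_const_nhds (α := ℕ) (x := c))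
    simpa using this
  have lim1 : Tendsto (fun n => ⟪e n, u (e n)⟫) atTop (𝓝 lam) := hdiag u lam hlam
  have lim2 : Tendsto (fun n => ⟪e n, u' (e n)⟫) atTop (𝓝 lam⁻¹) := hdiag u' lam⁻¹ hadj
  have lim3 : Tendsto (fun n => ⟪e n, u' (e n)⟫) atTop (𝓝 (starRingEnd ℂ lam)) := by
    have : ∀ n, ⟪e n, u' (e n)⟫ = starRingEnd ℂ ⟪e n, u (e n)⟫ := by
      intro n
      rw [← huadj, ← adjoint_inner_left, ← inner_conj_symm]
      rw [adjoint_adjoint]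
    simp only [this]
    exact (Complex.continuous_conj.tendsto lam).comp lim1
  have hconj : starRingEnd ℂ lam = lam⁻¹ := tendsto_nhds_unique lim3 lim2
  have hmod : ‖lam‖ = 1 := by
    have h1 : starRingEnd ℂ lam * lam = 1 := by
      rw [hconj, inv_mul_cancel₀ hlam0]
    have h2 : (Complex.normSq lam : ℂ) = 1 := by
      rw [← Complex.mul_conj]
      rw [mul_comm] at h1
      exact h1
    have h3 : Complex.normSq lam = 1 := by exact_mod_cast h2
    have h4 : ‖lam‖ ^ 2 = 1 := by
      rw [Complex.sq_norm]
      exact h3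
    nlinarith [norm_nonneg lam]
  refine ⟨lam, hmod, ?_⟩
  have e6 : v - lam • w = w * (u - lam • 1) - (w * w' - 1) * v := by
    rw [hudef, mul_sub, sub_mul, one_mul]
    have h7 : w * (lam • (1 : H →L[ℂ] H)) = lam • w := by rw [mul_smul_comm, mul_one]
    rw [h7]
    noncomm_ring
  have : IsCompactOperator ⇑(w * (u - lam • 1) - (w * w' - 1) * v) :=
    cpt_sub _ _ (mulL _ w hlam) (mulR _ v hw₁)
  rwa [← e6] at this
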